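/- Let n > 7 be an odd integer with binary expansion n = 2^{e_1} + 2^{e_2} + ⋯ + 2^{e_N} + 1, where N ≥ 1 and e_1 > e_2 > ⋯ > e_N > 0. If either N = 1 (i.e., n = 2^{e_1} + 1) or e_1 − e_2 > 2, then the length of the sequence of lower halves of n is l(n) = e_1 − 2 and its tail is t(n) = 4. -/

import Mathlib

/-- The lower half of a positive integer: `lh m = ⌊m/2⌋`. -/
def lh (m : ℕ) : ℕ := m / 2

/-- The length of the sequence of lower halves of `n`: the least positive `i`
such that the `i`-th iterate of `lh` at `n` lies in `{2, 3, 4}`. -/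
noncomputable def lhLen (n : ℕ) : ℕ :=
  sInf {i : ℕ | 0 < i ∧ lh^[i] n ∈ ({2, 3, 4} : Set ℕ)}

/-- The tail of the sequence of lower halves of `n`: its last term. -/
noncomputable def lhTail (n : ℕ) : ℕ := lh^[lhLen n] n

lemma lh_iter (i n : ℕ) : lh^[i] n = n / 2 ^ i := by
  induction i generalizing n with
  | zero => simp
  | succ k ih =>
    rw [Function.iterate_succ_apply', ih, lh, Nat.div_div_eq_div_mul, pow_succ]

lemma sum_pow_aux (f : ℕ → ℕ) :
    ∀ M, 0 < M → (∀ i j, i < j → j < M → f j < f i) →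
      (∑ i ∈ Finset.range M, 2 ^ f i) + 2 ^ f (M - 1) ≤ 2 ^ (f 0 + 1) := by
  intro M
  induction M with
  | zero => omega
  | succ M ih =>
    intro _ hf
    rcases Nat.eq_zero_or_pos M with rfl | hM
    · simp [Finset.sum_range_one, pow_succ]
      omega
    · have h1 := ih hM (fun i j hij hj => hf i j hij (by omega))
      have h2 : f M < f (M - 1) := hf (M - 1) M (by omega) (by omega)
      rw [Finset.sum_range_succ]
      have h3 : 2 ^ (f M + 1) ≤ 2 ^ f (M - 1) :=
        Nat.pow_le_pow_right (by norm_num) (by omega)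
      rw [pow_succ] at h3
      simp only [Nat.add_sub_cancel]
      omega

lemma sum_pow_lt (f : ℕ → ℕ) (M : ℕ) (hM : 0 < M)
    (hf : ∀ i j, i < j → j < M → f j < f i) :
    (∑ i ∈ Finset.range M, 2 ^ f i) < 2 ^ (f 0 + 1) := by
  have h := sum_pow_aux f M hM hf
  have : 0 < 2 ^ f (M - 1) := Nat.two_pow_pos _
  omega

theorem lhLen_lhTail_of_gap_large (n N : ℕ) (e : ℕ → ℕ) (hn7 : 7 < n) (hN : 1 ≤ N)
    (hanti : ∀ i j : ℕ, i < j → j < N → e j < e i)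
    (hpos : ∀ i : ℕ, i < N → 0 < e i)
    (hn : n = (∑ i ∈ Finset.range N, 2 ^ e i) + 1)
    (hgap : N = 1 ∨ e 1 + 2 < e 0) :
    lhLen n = e 0 - 2 ∧ lhTail n = 4 := by
  -- split off first term
  have hsplit : (∑ i ∈ Finset.range N, 2 ^ e i) =
      (∑ i ∈ Finset.range (N - 1), 2 ^ e (i + 1)) + 2 ^ e 0 := by
    have : N = (N - 1) + 1 := by omega
    rw [this, Finset.sum_range_succ']
    simp
  set t := ∑ i ∈ Finset.range (N - 1), 2 ^ e (i + 1) with ht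
  have hn' : n = 2 ^ e 0 + t + 1 := by omega
  -- e 0 ≥ 3
  have he0 : 3 ≤ e 0 := by
    rcases hgap with h1 | h2
    · subst h1
      simp only [Nat.sub_self, Finset.range_zero, Finset.sum_empty, ht] at hn'
      by_contra h
      have : 2 ^ e 0 ≤ 2 ^ 2 := Nat.pow_le_pow_right (by norm_num) (by omega)
      omega
    · omega
  -- upper bound: t + 1 < 2 ^ (e 0 - 2)
  have htwo : (1:ℕ) < 2 := one_lt_two
  have hub : t + 1 < 2 ^ (e 0 - 2) := by
    rcases Nat.lt_or_ge N 2 with hN1 | hN2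
    · have hNe : N = 1 := by omega
      have ht0 : t = 0 := by simp [ht, hNe]
      have : (2:ℕ) ^ 1 ≤ 2 ^ (e 0 - 2) := Nat.pow_le_pow_right (by norm_num) (by omega)
      omega
    · have hg : e 1 + 2 < e 0 := by rcases hgap with h | h; omega; exact h
      have hlt : t < 2 ^ (e 1 + 1) := by
        apply sum_pow_lt (fun i => e (i + 1)) (N - 1) (by omega)
        intro i j hij hj
        exact hanti (i + 1) (j + 1) (by omega) (by omega)
      have hle : (2:ℕ) ^ (e 1 + 1) ≤ 2 ^ (e 0 - 2) :=
        Nat.pow_le_pow_right (by norm_num) (by omega)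
      -- parity: t is even, 2^(e1+1) is even
      have hte : 2 ∣ t := by
        apply Finset.dvd_sum
        intro i hi
        exact dvd_pow_self 2 (hpos (i + 1) (by simp at hi; omega)).ne'
      have h2e : 2 ∣ 2 ^ (e 1 + 1) := dvd_pow_self 2 (by omega)
      omega
  -- the key division facts
  have hp2 : (4:ℕ) * 2 ^ (e 0 - 2) = 2 ^ e 0 := by
    rw [show (4:ℕ) = 2 ^ 2 from rfl, ← pow_add]
    congr 1
    omega
  have hdiv4 : n / 2 ^ (e 0 - 2) = 4 := by
    apply Nat.div_eq_of_lt_le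
    · omega
    · omega
  have hbig : ∀ i : ℕ, i < e 0 - 2 → 8 ≤ n / 2 ^ i := by
    intro i hi
    have h1 : 2 ^ (e 0 - i) ≤ n / 2 ^ i := by
      rw [Nat.le_div_iff_mul_le (Nat.two_pow_pos i), ← pow_add]
      calc 2 ^ (e 0 - i + i) = 2 ^ e 0 := by congr 1; omega
        _ ≤ n := by omega
    have h2 : (2:ℕ) ^ 3 ≤ 2 ^ (e 0 - i) := Nat.pow_le_pow_right (by norm_num) (by omega)
    omega
  have hmem : (e 0 - 2) ∈ {i : ℕ | 0 < i ∧ lh^[i] n ∈ ({2, 3, 4} : Set ℕ)} := by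
    constructor
    · omega
    · rw [lh_iter, hdiv4]
      simp
  have hlen : lhLen n = e 0 - 2 := by
    apply le_antisymm (Nat.sInf_le hmem)
    apply le_csInf ⟨_, hmem⟩
    rintro i ⟨hi0, hiS⟩
    by_contra h
    push_neg at h
    have := hbig i (by omega)
    rw [lh_iter] at hiS
    simp only [Set.mem_insert_iff, Set.mem_singleton_iff] at hiS
    omega
  refine ⟨hlen, ?_⟩
  rw [lhTail, hlen, lh_iter, hdiv4]
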